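/- Let σ be a geometric simplex with an affine metric and f an affine function on σ with distinct values at the vertices and gradient not parallel to any face. Let p be the vertex of σ at which f attains its maximum. Then every point of σ lies on some gradient trajectory (piecewise linear integral curve of the multivalued negative-gradient field of f restricted to faces of σ) starting at p; i.e., σ is swept by the gradient trajectories from p. -/

import Mathlib

open EuclideanGeometry Real

/-- The metric on `σ` is *sharp* (Definition 5.2): for every vertex `a` of `σ` (taken from
the vertex set `vert`) and every 2-dimensional affine plane `L` through `a` whose
intersection with `σ` is a (nondegenerate) triangle `abc`, the triangle is acute-angled. -/
def SharpSet (m : ℕ) (σ : Set (EuclideanSpace ℝ (Fin m)))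
    (vert : Set (EuclideanSpace ℝ (Fin m))) : Prop :=
  ∀ a ∈ vert, ∀ b c : EuclideanSpace ℝ (Fin m),
    AffineIndependent ℝ ![a, b, c] →
    (∃ L : AffineSubspace ℝ (EuclideanSpace ℝ (Fin m)), a ∈ L ∧
      Module.finrank ℝ L.direction = 2 ∧
      (L : Set (EuclideanSpace ℝ (Fin m))) ∩ σ = convexHull ℝ {a, b, c}) →
    ∠ b a c < π / 2 ∧ ∠ a b c < π / 2 ∧ ∠ a c b < π / 2

/-- `u` is the negative gradient of the affine function `f` restricted to the face of the
simplex spanned by `{v i : i ∈ s}` (with respect to the Euclidean metric of the face):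
`u` lies in the direction space of the face and `⟪u, v i − v j⟫ = f (v j) − f (v i)`. -/
def IsNegGradOnFace (m : ℕ) (v : Fin (m + 1) → EuclideanSpace ℝ (Fin m))
    (f : EuclideanSpace ℝ (Fin m) → ℝ) (s : Finset (Fin (m + 1)))
    (u : EuclideanSpace ℝ (Fin m)) : Prop :=
  u ∈ vectorSpan ℝ (v '' ↑s) ∧
  ∀ i ∈ s, ∀ j ∈ s, (inner ℝ u (v i - v j) : ℝ) = f (v j) - f (v i)

/-- A gradient trajectory of the multivalued negative gradient field of `f` on the faces
of the simplex spanned by `v`: a concatenation of `k` affine segments, the `l`-th defined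
on `[t l, t (l+1)]`, each contained in some face and with constant derivative equal to the
negative gradient of `f` on that face. -/
def IsGradTraj (m : ℕ) (v : Fin (m + 1) → EuclideanSpace ℝ (Fin m))
    (f : EuclideanSpace ℝ (Fin m) → ℝ) (k : ℕ) (t : ℕ → ℝ)
    (γ : ℝ → EuclideanSpace ℝ (Fin m)) : Prop :=
  (∀ l < k, t l ≤ t (l + 1)) ∧
  ∀ l < k, ∃ s : Finset (Fin (m + 1)), s.Nonempty ∧
    ∃ u, IsNegGradOnFace m v f s u ∧
      ∀ r ∈ Set.Icc (t l) (t (l + 1)),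
        γ r ∈ convexHull ℝ (v '' ↑s) ∧ γ r = γ (t l) + (r - t l) • u

section Aux

variable {m : ℕ} {v : Fin (m + 1) → EuclideanSpace ℝ (Fin m)}
  {s : Finset (Fin (m + 1))}

/-- weights give hull membership -/
lemma aux_mem_hull {w : Fin (m + 1) → ℝ} (hw0 : ∀ i ∈ s, 0 ≤ w i)
    (hw1 : ∑ i ∈ s, w i = 1) :
    ∑ i ∈ s, w i • v i ∈ convexHull ℝ (v '' ↑s) := by
  have h := s.centerMass_mem_convexHull (w := w) (z := v) hw0
    (by rw [hw1]; exact one_pos) (fun i hi => Set.mem_image_of_mem v hi)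
  rwa [Finset.centerMass_eq_of_sum_1 _ _ hw1] at h

/-- hull membership gives weights -/
lemma aux_weights (hinj : Function.Injective v) {x : EuclideanSpace ℝ (Fin m)}
    (hx : x ∈ convexHull ℝ (v '' ↑s)) :
    ∃ w : Fin (m + 1) → ℝ, (∀ i ∈ s, 0 ≤ w i) ∧ ∑ i ∈ s, w i = 1 ∧
      ∑ i ∈ s, w i • v i = x := by
  classical
  rw [← Finset.coe_image, Finset.convexHull_eq] at hx
  obtain ⟨w, hw0, hw1, hcm⟩ := hx
  have hsi : ∀ g : EuclideanSpace ℝ (Fin m) → ℝ, ∑ y ∈ s.image v, g y = ∑ i ∈ s, g (v i) :=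
    fun g => Finset.sum_image (fun i _ j _ h => hinj h)
  refine ⟨fun i => w (v i), fun i hi => hw0 _ (Finset.mem_image_of_mem v hi), ?_, ?_⟩
  · rw [← hsi w]; exact hw1
  · rw [Finset.centerMass_eq_of_sum_1 _ _ hw1] at hcm
    rw [← hcm, Finset.sum_image (fun i _ j _ h => hinj h)]
    simp

/-- coefficients for a vector in the vectorSpan of a face -/
lemma aux_coeffs (hs : s.Nonempty) {u : EuclideanSpace ℝ (Fin m)}
    (hu : u ∈ vectorSpan ℝ (v '' ↑s)) :
    ∃ c : Fin (m + 1) → ℝ, ∑ i ∈ s, c i = 0 ∧ ∑ i ∈ s, c i • v i = u := by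
  classical
  obtain ⟨j₀, hj₀⟩ := hs
  have hsp : vectorSpan ℝ (v '' ↑s) = Submodule.span ℝ ((· -ᵥ v j₀) '' (v '' ↑s)) :=
    vectorSpan_eq_span_vsub_set_right ℝ (Set.mem_image_of_mem v hj₀)
  rw [hsp] at hu
  induction hu using Submodule.span_induction with
  | mem z hz =>
      obtain ⟨y, ⟨i, hi, rfl⟩, rfl⟩ := hz
      rw [Finset.mem_coe] at hi
      refine ⟨fun x => (if x = i then (1:ℝ) else 0) - (if x = j₀ then 1 else 0), ?_, ?_⟩
      · rw [Finset.sum_sub_distrib]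
        simp [Finset.sum_ite_eq', hi, hj₀]
      · simp only [sub_smul, ite_smul, one_smul, zero_smul]
        rw [Finset.sum_sub_distrib, Finset.sum_ite_eq', Finset.sum_ite_eq']
        simp [hi, hj₀, vsub_eq_sub]
  | zero => exact ⟨0, by simp, by simp⟩
  | add y z hy hz hcy hcz =>
      obtain ⟨c₁, h₁, h₁'⟩ := hcy
      obtain ⟨c₂, h₂, h₂'⟩ := hcz
      exact ⟨c₁ + c₂, by simp [Finset.sum_add_distrib, h₁, h₂],
        by simp [add_smul, Finset.sum_add_distrib, h₁', h₂']⟩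
  | smul a y hy hcy =>
      obtain ⟨c₁, h₁, h₁'⟩ := hcy
      refine ⟨a • c₁, by simp [← Finset.mul_sum, h₁], ?_⟩
      rw [← h₁', Finset.smul_sum]
      exact Finset.sum_congr rfl fun i _ => mul_smul a (c₁ i) (v i)

end Aux
section Aux2

variable {m : ℕ} {v : Fin (m + 1) → EuclideanSpace ℝ (Fin m)}
  {g : EuclideanSpace ℝ (Fin m)} {c₀ : ℝ} {f : EuclideanSpace ℝ (Fin m) → ℝ}

/-- existence of the negative gradient on a face, as orthogonal projection of `-g`. -/
lemma aux_negGrad (hf : ∀ x, f x = inner ℝ g x + c₀) (s : Finset (Fin (m + 1))) :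
    ∃ u, IsNegGradOnFace m v f s u := by
  set K : Submodule ℝ (EuclideanSpace ℝ (Fin m)) := vectorSpan ℝ (v '' ↑s) with hK
  refine ⟨(K.orthogonalProjectionOnto (-g) : EuclideanSpace ℝ (Fin m)), Submodule.coe_mem _, ?_⟩
  intro i hi j hj
  have hd : v i - v j ∈ K := by
    rw [hK, ← vsub_eq_sub]
    exact vsub_mem_vectorSpan ℝ (Set.mem_image_of_mem v hi) (Set.mem_image_of_mem v hj)
  have horth : -g - (K.orthogonalProjectionOnto (-g) : EuclideanSpace ℝ (Fin m)) ∈ Kᗮ :=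
    K.sub_starProjection_mem_orthogonal (-g)
  have h0 : (inner ℝ (-g - (K.orthogonalProjectionOnto (-g) : EuclideanSpace ℝ (Fin m))) (v i - v j) : ℝ) = 0 := by
    rw [real_inner_comm]
    exact horth _ hd
  rw [inner_sub_left, inner_neg_left, sub_eq_zero] at h0
  rw [← h0, hf, hf, inner_sub_right]
  ring

/-- a trajectory can be extended by one segment. -/
lemma aux_extend {k : ℕ} {t : ℕ → ℝ} {γ : ℝ → EuclideanSpace ℝ (Fin m)}
    (htraj : IsGradTraj m v f k t γ) {s : Finset (Fin (m + 1))} (hs : s.Nonempty)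
    {u : EuclideanSpace ℝ (Fin m)} (hu : IsNegGradOnFace m v f s u) {Δ : ℝ} (hΔ : 0 < Δ)
    (hmem : ∀ τ ∈ Set.Icc (0 : ℝ) Δ, γ (t k) + τ • u ∈ convexHull ℝ (v '' ↑s)) :
    ∃ (t' : ℕ → ℝ) (γ' : ℝ → EuclideanSpace ℝ (Fin m)),
      IsGradTraj m v f (k + 1) t' γ' ∧ γ' (t' 0) = γ (t 0) ∧
      γ' (t' (k + 1)) = γ (t k) + Δ • u := by
  classical
  have hmono : ∀ b, b ≤ k → ∀ a, a ≤ b → t a ≤ t b := by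
    intro b
    induction b with
    | zero => intro _ a ha; rw [Nat.le_zero.mp ha]
    | succ n ih =>
        intro hb a ha
        rcases Nat.lt_succ_iff_lt_or_eq.mp (Nat.lt_succ_of_le ha) with h | h
        · exact le_trans (ih (le_trans (Nat.le_succ n) hb) a (Nat.lt_succ_iff.mp h))
            (htraj.1 n (Nat.lt_of_succ_le hb))
        · rw [h]
    
  refine ⟨fun l => if l ≤ k then t l else t k + Δ,
    fun r => if r ≤ t k then γ r else γ (t k) + (r - t k) • u, ⟨?_, ?_⟩, ?_, ?_⟩
  · intro l hl
    by_cases hlk : l < k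
    · simp only [if_pos (le_of_lt hlk), if_pos (Nat.succ_le_of_lt hlk)]
      exact htraj.1 l hlk
    · have hl' : l = k := Nat.eq_of_lt_succ_of_not_lt hl hlk
      subst hl'
      simp only [le_refl, if_pos, if_neg (Nat.not_succ_le_self l)]
      exact le_add_of_nonneg_right (le_of_lt hΔ)
  · intro l hl
    by_cases hlk : l < k
    · obtain ⟨sl, hsl, ul, hul, hseg⟩ := htraj.2 l hlk
      refine ⟨sl, hsl, ul, hul, ?_⟩
      intro r hr
      dsimp only at hr ⊢
      rw [if_pos (le_of_lt hlk), if_pos (Nat.succ_le_of_lt hlk)] at hr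
      have hrk : r ≤ t k := le_trans hr.2 (hmono k le_rfl (l + 1) (Nat.succ_le_of_lt hlk))
      have htlk : t l ≤ t k := hmono k le_rfl l (le_of_lt hlk)
      obtain ⟨hm, he⟩ := hseg r hr
      simp only [if_pos (le_of_lt hlk), if_pos hrk, if_pos htlk]
      exact ⟨hm, he⟩
    · have hl' : l = k := Nat.eq_of_lt_succ_of_not_lt hl hlk
      subst hl'
      refine ⟨s, hs, u, hu, ?_⟩
      intro r hr
      dsimp only at hr ⊢
      rw [if_pos (le_refl l), if_neg (Nat.not_succ_le_self l)] at hr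
      simp only [if_pos (le_refl l)]
      by_cases hrk : r ≤ t l
      · have hre : r = t l := le_antisymm hrk hr.1
        subst hre
        simp only [if_pos (le_refl (t l))]
        constructor
        · have := hmem 0 ⟨le_rfl, le_of_lt hΔ⟩
          simpa using this
        · simp
      · simp only [if_neg hrk, if_pos (le_refl (t l))]
        refine ⟨hmem (r - t l) ⟨?_, ?_⟩, trivial⟩
        · exact sub_nonneg.mpr hr.1
        · linarith [hr.2]
  · have h0k : (0 : ℕ) ≤ k := Nat.zero_le k
    simp only [if_pos h0k, if_pos (hmono k le_rfl 0 h0k)]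
  · dsimp only
    rw [if_neg (Nat.not_succ_le_self k), if_neg (by linarith : ¬ t k + Δ ≤ t k)]
    congr 1
    rw [add_sub_cancel_left]

end Aux2

/-- Lemma 10.2: Let `σ` be the simplex spanned by affinely independent
points `v 0, …, v m` with a sharp Euclidean metric, and `f` an affine function with
distinct values at the vertices and gradient not parallel to any facet. If `p = v i₁` is
the vertex at which `f` attains its maximum, then every point of `σ` lies on a gradient
trajectory starting at `p`: `σ` is swept by the gradient trajectories from `p`. -/
theorem stmt15 (m : ℕ) (v : Fin (m + 1) → EuclideanSpace ℝ (Fin m))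
    (hv : AffineIndependent ℝ v)
    (hsharp : SharpSet m (convexHull ℝ (Set.range v)) (Set.range v))
    (g : EuclideanSpace ℝ (Fin m)) (c₀ : ℝ) (f : EuclideanSpace ℝ (Fin m) → ℝ)
    (hf : ∀ x, f x = inner ℝ g x + c₀)
    (hdistinct : Function.Injective fun i => f (v i))
    (hpar : ∀ i : Fin (m + 1), g ∉ vectorSpan ℝ (v '' {i}ᶜ))
    (i₁ : Fin (m + 1)) (hmax : ∀ j, f (v j) ≤ f (v i₁)) :
    ∀ x ∈ convexHull ℝ (Set.range v),
      ∃ (k : ℕ) (t : ℕ → ℝ) (γ : ℝ → EuclideanSpace ℝ (Fin m)),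
        IsGradTraj m v f k t γ ∧ γ (t 0) = v i₁ ∧ γ (t k) = x := by
  classical
  have hinj : Function.Injective v := hv.injective
  have hfn : ∀ i j : Fin (m + 1), i ≠ j → f (v i) ≠ f (v j) :=
    fun i j hij h => hij (hdistinct h)
  have main : ∀ s : Finset (Fin (m + 1)), s.Nonempty → ∀ x ∈ convexHull ℝ (v '' ↑s),
      ∃ (k : ℕ) (t : ℕ → ℝ) (γ : ℝ → EuclideanSpace ℝ (Fin m)),
        IsGradTraj m v f k t γ ∧ γ (t 0) = v i₁ ∧ γ (t k) = x := by
    intro s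
    induction s using Finset.strongInduction with
    | _ s IH =>
      intro hs x hx
      obtain ⟨w, hw0, hw1, hwx⟩ := aux_weights hinj hx
      by_cases hzero : ∃ i ∈ s, w i = 0
      · -- a weight vanishes: pass to a smaller face
        obtain ⟨i, his, hwi⟩ := hzero
        have hsum' : ∑ j ∈ s.erase i, w j = 1 := by
          rwa [← Finset.add_sum_erase s w his, hwi, zero_add] at hw1
        have hxe : ∑ j ∈ s.erase i, w j • v j = x := by
          rwa [← Finset.add_sum_erase s (fun j => w j • v j) his, hwi, zero_smul, zero_add] at hwx
        have hx' : x ∈ convexHull ℝ (v '' ↑(s.erase i)) := by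
          rw [← hxe]
          exact aux_mem_hull (fun j hj => hw0 j (Finset.mem_of_mem_erase hj)) hsum'
        have hne : (s.erase i).Nonempty := by
          rw [Finset.nonempty_iff_ne_empty]
          intro h
          rw [h] at hsum'
          simp at hsum'
        exact IH (s.erase i) (Finset.erase_ssubset his) hne x hx'
      · push_neg at hzero
        have hpos : ∀ i ∈ s, 0 < w i := fun i hi =>
          lt_of_le_of_ne (hw0 i hi) (Ne.symm (hzero i hi))
        by_cases hcard : s.card = 1
        · -- a single vertex
          obtain ⟨i, rfl⟩ := Finset.card_eq_one.mp hcard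
          have hw1' : w i = 1 := by simpa using hw1
          have hxv : x = v i := by rw [← hwx]; simp [hw1']
          by_cases hii : i = i₁
          · subst hii
            exact ⟨0, fun _ => 0, fun _ => v i, ⟨fun l hl => absurd hl (Nat.not_lt_zero l),
              fun l hl => absurd hl (Nat.not_lt_zero l)⟩, rfl, hxv.symm⟩
          · -- a vertex other than the maximum: connect along the edge to `v i₁`
            have hdne : v i - v i₁ ≠ 0 := sub_ne_zero.mpr fun h => hii (hinj h)
            have hn : (0 : ℝ) < ‖v i - v i₁‖ ^ 2 := pow_pos (norm_pos_iff.mpr hdne) 2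
            have hnne : (‖v i - v i₁‖ ^ 2 : ℝ) ≠ 0 := ne_of_gt hn
            have hapos : (0 : ℝ) < f (v i₁) - f (v i) :=
              sub_pos.mpr (lt_of_le_of_ne (hmax i) (hfn i i₁ hii))
            have hane : (f (v i₁) - f (v i)) ≠ 0 := ne_of_gt hapos
            set d : EuclideanSpace ℝ (Fin m) := v i - v i₁ with hd
            set a : ℝ := f (v i₁) - f (v i) with ha
            set u : EuclideanSpace ℝ (Fin m) := (a / ‖d‖ ^ 2) • d with hu
            set Δ : ℝ := ‖d‖ ^ 2 / a with hΔ
            have hΔpos : 0 < Δ := div_pos hn hapos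
            have hinner : (inner ℝ u d : ℝ) = a := by
              rw [hu, real_inner_smul_left, real_inner_self_eq_norm_sq,
                div_mul_cancel₀ _ hnne]
            have hface : IsNegGradOnFace m v f {i₁, i} u := by
              constructor
              · refine Submodule.smul_mem _ _ ?_
                rw [hd, ← vsub_eq_sub]
                exact vsub_mem_vectorSpan ℝ (Set.mem_image_of_mem v (by simp))
                  (Set.mem_image_of_mem v (by simp))
              · intro a' ha' b' hb'
                simp only [Finset.mem_insert, Finset.mem_singleton] at ha' hb'
                rcases ha' with rfl | rfl <;> rcases hb' with rfl | rfl
                · simp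
                · have hrw : v a' - v b' = -d := by rw [hd]; abel
                  rw [hrw, inner_neg_right, hinner, ha]; ring
                · have hrw : v a' - v b' = d := by rw [hd]
                  rw [hrw, hinner, ha]
                · simp
            have hone : Δ * (a / ‖d‖ ^ 2) = 1 := by
              rw [hΔ]; field_simp
            have hmemedge : ∀ τ ∈ Set.Icc (0 : ℝ) Δ,
                v i₁ + τ • u ∈ convexHull ℝ (v '' ↑({i₁, i} : Finset (Fin (m + 1)))) := by
              intro τ hτ
              have hθ0 : 0 ≤ τ * (a / ‖d‖ ^ 2) :=
                mul_nonneg hτ.1 (le_of_lt (div_pos hapos hn))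
              have hθ1 : τ * (a / ‖d‖ ^ 2) ≤ 1 := by
                rw [← hone]
                exact mul_le_mul_of_nonneg_right hτ.2 (le_of_lt (div_pos hapos hn))
              have hrw : v i₁ + τ • u = (1 - τ * (a / ‖d‖ ^ 2)) • v i₁
                  + (τ * (a / ‖d‖ ^ 2)) • v i := by
                rw [hu, smul_smul, hd, smul_sub, sub_smul, one_smul]
                abel
              rw [hrw]
              refine (convex_convexHull ℝ _) ?_ ?_ (by linarith) hθ0 (by ring)
              · exact subset_convexHull ℝ _ (Set.mem_image_of_mem v (by simp))
              · exact subset_convexHull ℝ _ (Set.mem_image_of_mem v (by simp))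
            obtain ⟨t₀, γ₀, htraj₀, h00, hk0⟩ := aux_extend (m := m) (v := v) (f := f)
              (k := 0) (t := fun _ => 0) (γ := fun _ => v i₁)
              ⟨fun l hl => absurd hl (Nat.not_lt_zero l),
                fun l hl => absurd hl (Nat.not_lt_zero l)⟩
              (show ({i₁, i} : Finset (Fin (m + 1))).Nonempty from ⟨i₁, by simp⟩)
              hface hΔpos hmemedge
            refine ⟨1, t₀, γ₀, htraj₀, h00, ?_⟩
            rw [hk0, hxv]
            rw [hu, smul_smul, hone, one_smul, hd]
            abel
        · -- at least two vertices with positive weight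
          have hcard2 : 1 < s.card := lt_of_le_of_ne (Finset.one_le_card.mpr hs) (Ne.symm hcard)
          obtain ⟨u, hface⟩ := aux_negGrad (v := v) hf s
          have hu0 : u ≠ 0 := by
            obtain ⟨i, hi, j, hj, hij⟩ := Finset.one_lt_card.mp hcard2
            intro h
            have h2 := hface.2 i hi j hj
            rw [h, inner_zero_left] at h2
            have hfe : f (v j) = f (v i) := by linarith
            exact hij (hdistinct (a₁ := i) (a₂ := j) hfe.symm)
          obtain ⟨c, hc0, hcu⟩ := aux_coeffs hs hface.1
          have hcpos : ∃ i ∈ s, 0 < c i := by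
            by_contra h
            push_neg at h
            have hall : ∀ i ∈ s, c i = 0 := (Finset.sum_eq_zero_iff_of_nonpos h).mp hc0
            apply hu0
            rw [← hcu]
            exact Finset.sum_eq_zero fun i hi => by rw [hall i hi, zero_smul]
          obtain ⟨i₀, hi₀P, hmin⟩ := Finset.exists_min_image (s.filter fun i => 0 < c i)
            (fun i => w i / c i)
            (by obtain ⟨i, hi, hci⟩ := hcpos; exact ⟨i, Finset.mem_filter.mpr ⟨hi, hci⟩⟩)
          obtain ⟨hi₀s, hci₀⟩ := Finset.mem_filter.mp hi₀P
          set Δ : ℝ := w i₀ / c i₀ with hΔdef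
          have hΔpos : 0 < Δ := div_pos (hpos i₀ hi₀s) hci₀
          have hkey : ∀ i ∈ s, 0 < c i → Δ * c i ≤ w i := by
            intro i hi hci
            have h1 := hmin i (Finset.mem_filter.mpr ⟨hi, hci⟩)
            have h2 : Δ * c i ≤ (w i / c i) * c i :=
              mul_le_mul_of_nonneg_right h1 (le_of_lt hci)
            rwa [div_mul_cancel₀ _ (ne_of_gt hci)] at h2
          have hnn : ∀ δ : ℝ, 0 ≤ δ → δ ≤ Δ → ∀ i ∈ s, 0 ≤ w i - δ * c i := by
            intro δ hδ0 hδΔ i hi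
            by_cases hci : 0 < c i
            · have h1 : δ * c i ≤ Δ * c i := mul_le_mul_of_nonneg_right hδΔ (le_of_lt hci)
              have h2 := hkey i hi hci
              linarith
            · push_neg at hci
              have h3 : δ * c i ≤ 0 := mul_nonpos_of_nonneg_of_nonpos hδ0 hci
              have h4 := hw0 i hi
              linarith
          have hsum1 : ∀ δ : ℝ, ∑ i ∈ s, (w i - δ * c i) = 1 := by
            intro δ
            rw [Finset.sum_sub_distrib, hw1, ← Finset.mul_sum, hc0, mul_zero, sub_zero]
          have hcombo : ∀ δ : ℝ, ∑ i ∈ s, (w i - δ * c i) • v i = x - δ • u := by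
            intro δ
            simp only [sub_smul, mul_smul]
            rw [Finset.sum_sub_distrib, hwx, ← Finset.smul_sum, hcu]
          have hz : w i₀ - Δ * c i₀ = 0 := by
            rw [hΔdef, div_mul_cancel₀ _ (ne_of_gt hci₀), sub_self]
          have hyerase : x - Δ • u ∈ convexHull ℝ (v '' ↑(s.erase i₀)) := by
            have e1 : ∑ i ∈ s.erase i₀, (w i - Δ * c i) = 1 := by
              have h := Finset.add_sum_erase s (fun i => w i - Δ * c i) hi₀s
              rw [hz, zero_add] at h
              rw [h]; exact hsum1 Δ
            have e2 : ∑ i ∈ s.erase i₀, (w i - Δ * c i) • v i = x - Δ • u := by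
              have h := Finset.add_sum_erase s (fun i => (w i - Δ * c i) • v i) hi₀s
              rw [hz, zero_smul, zero_add] at h
              rw [h]; exact hcombo Δ
            rw [← e2]
            exact aux_mem_hull
              (fun i hi => hnn Δ (le_of_lt hΔpos) le_rfl i (Finset.mem_of_mem_erase hi)) e1
          have herasene : (s.erase i₀).Nonempty := by
            rw [← Finset.card_pos, Finset.card_erase_of_mem hi₀s]
            omega
          obtain ⟨k, t, γ, htraj, h0, hk⟩ :=
            IH (s.erase i₀) (Finset.erase_ssubset hi₀s) herasene _ hyerase
          have hmem' : ∀ τ ∈ Set.Icc (0 : ℝ) Δ, γ (t k) + τ • u ∈ convexHull ℝ (v '' ↑s) := by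
            intro τ hτ
            rw [hk]
            have hrw : x - Δ • u + τ • u = x - (Δ - τ) • u := by
              rw [sub_smul]; abel
            rw [hrw, ← hcombo (Δ - τ)]
            exact aux_mem_hull (hnn (Δ - τ) (by linarith [hτ.2]) (by linarith [hτ.1]))
              (hsum1 (Δ - τ))
          obtain ⟨t', γ', htraj', h0', hk'⟩ := aux_extend htraj hs hface hΔpos hmem'
          refine ⟨k + 1, t', γ', htraj', h0'.trans h0, ?_⟩
          rw [hk', hk]
          abel
  intro x hx
  refine main Finset.univ Finset.univ_nonempty x ?_
  rwa [Finset.coe_univ, Set.image_univ]
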